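/- arXiv:2308.00901 — 5 statements merged into one kernel-verified Lean document; each statement's English description precedes it below -/
import Mathlib

section
/- Let λ be a nonzero real number, α a positive integer, and t a real number with |t| < 1/2. Then the series Σ_{n=1}^{∞} \overline{H}_{n,λ}(α) t^n converges and Σ_{n=1}^{∞} \overline{H}_{n,λ}(α) t^n = −Li_{α,λ}(−t/(1−t))/(1−t). -/
open Finset

/-- The degenerate falling factorial `(x)_{n,λ} = x(x-λ)⋯(x-(n-1)λ)`, with `(x)_{0,λ} = 1`. -/
noncomputable def degFall (x lam : ℝ) (n : ℕ) : ℝ :=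
  ∏ i ∈ Finset.range n, (x - i * lam)

/-- The degenerate harmonic numbers `H_{n,λ} = Σ_{k=1}^n (-λ)^(k-1) (1)_{k,1/λ} / k!`, `H_{0,λ}=0`. -/
noncomputable def degHarm (lam : ℝ) (n : ℕ) : ℝ :=
  ∑ k ∈ Finset.Icc 1 n, (-lam) ^ (k - 1) * degFall 1 (1 / lam) k / (k.factorial : ℝ)

/-- The degenerate harmonic numbers of order `α`:
`H_{n,λ}(α) = Σ_{k=1}^n (-λ)^(k-1) (1)_{k,1/λ} / (k^α (k-1)!)`, `H_{0,λ}(α)=0`. -/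
noncomputable def degHarmOrd (lam : ℝ) (α : ℕ) (n : ℕ) : ℝ :=
  ∑ k ∈ Finset.Icc 1 n,
    (-lam) ^ (k - 1) * degFall 1 (1 / lam) k / ((k : ℝ) ^ α * ((k - 1).factorial : ℝ))

/-- The alternating degenerate harmonic numbers of order `α`:
`H̄_{n,λ}(α) = Σ_{k=1}^n C(n,k) λ^(k-1) (1)_{k,1/λ} / (k^α (k-1)!)`, `H̄_{0,λ}(α)=0`. -/
noncomputable def altDegHarmOrd (lam : ℝ) (α : ℕ) (n : ℕ) : ℝ :=
  ∑ k ∈ Finset.Icc 1 n,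
    (n.choose k : ℝ) * lam ^ (k - 1) * degFall 1 (1 / lam) k /
      ((k : ℝ) ^ α * ((k - 1).factorial : ℝ))

/-- The degenerate logarithm: `degLog λ x = (x^λ - 1)/λ`, i.e. `log_λ(1+t) = degLog λ (1+t)`. -/
noncomputable def degLog (lam x : ℝ) : ℝ :=
  (x ^ lam - 1) / lam

/-- The degenerate polylogarithm
`Li_{k,λ}(x) = Σ_{n=1}^∞ (-λ)^(n-1) (1)_{n,1/λ} x^n / ((n-1)! n^k)` (as a `tsum`, reindexed). -/
noncomputable def degPolylog (k : ℕ) (lam x : ℝ) : ℝ :=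
  ∑' n : ℕ, (-lam) ^ n * degFall 1 (1 / lam) (n + 1) * x ^ (n + 1) /
    ((n.factorial : ℝ) * ((n : ℝ) + 1) ^ k)

/-- The degenerate hyperharmonic numbers of order `α`:
`H_{n,λ}^{(1)}(α) = H_{n,λ}(α)`, `H_{n,λ}^{(r)}(α) = Σ_{k=1}^n H_{k,λ}^{(r-1)}(α)` for `r ≥ 2`. -/
noncomputable def degHyperHarm (lam : ℝ) (α : ℕ) : ℕ → ℕ → ℝ
  | 0, _ => 0
  | 1, n => degHarmOrd lam α n
  | r + 2, n => ∑ k ∈ Finset.Icc 1 n, degHyperHarm lam α (r + 1) k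

noncomputable def bSeq (lam : ℝ) (α : ℕ) (m : ℕ) : ℝ :=
  lam ^ m * degFall 1 (1 / lam) (m + 1) / (((m : ℝ) + 1) ^ α * (m.factorial : ℝ))

lemma bSeq_succ (lam : ℝ) (hlam : lam ≠ 0) (α m : ℕ) :
    bSeq lam α (m + 1) =
      bSeq lam α m * ((lam - ((m : ℝ) + 1)) / ((m : ℝ) + 1)) *
        (((m : ℝ) + 1) / ((m : ℝ) + 2)) ^ α := by
  have hm1 : ((m : ℝ) + 1) ≠ 0 := by positivity
  have hm2 : ((m : ℝ) + 2) ≠ 0 := by positivity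
  have hfac : (m.factorial : ℝ) ≠ 0 := by exact_mod_cast m.factorial_ne_zero
  have hdf : degFall 1 (1 / lam) (m + 2) =
      degFall 1 (1 / lam) (m + 1) * (1 - ((m : ℝ) + 1) * (1 / lam)) := by
    unfold degFall
    rw [Finset.prod_range_succ]
    push_cast
    ring
  unfold bSeq
  rw [show m + 1 + 1 = m + 2 from rfl, hdf, Nat.factorial_succ]
  push_cast
  rw [div_pow]
  field_simp
  ring

lemma abs_bSeq_succ_le (lam : ℝ) (hlam : lam ≠ 0) (α m : ℕ) :
    |bSeq lam α (m + 1)| ≤ |bSeq lam α m| * (1 + |lam| / ((m : ℝ) + 1)) := by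
  have hm1 : (0:ℝ) < (m : ℝ) + 1 := by positivity
  rw [bSeq_succ lam hlam α m, abs_mul, abs_mul]
  have h1 : |(lam - ((m : ℝ) + 1)) / ((m : ℝ) + 1)| ≤ 1 + |lam| / ((m : ℝ) + 1) := by
    rw [abs_div, abs_of_pos hm1, div_le_iff₀ hm1]
    have := abs_sub (lam) (((m : ℝ) + 1))
    calc |lam - ((m : ℝ) + 1)| ≤ |lam| + |(m : ℝ) + 1| := abs_sub _ _
      _ = |lam| + ((m : ℝ) + 1) := by rw [abs_of_pos hm1]
      _ ≤ (1 + |lam| / ((m : ℝ) + 1)) * ((m : ℝ) + 1) := by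
          rw [add_mul, one_mul, div_mul_cancel₀ _ (ne_of_gt hm1)]; linarith
  have h2 : |(((m : ℝ) + 1) / ((m : ℝ) + 2)) ^ α| ≤ 1 := by
    rw [abs_pow]
    apply pow_le_one₀ (abs_nonneg _)
    rw [abs_div, abs_of_pos hm1, abs_of_pos (by positivity : (0:ℝ) < (m:ℝ)+2)]
    rw [div_le_one (by positivity)]; linarith
  calc |bSeq lam α m| * |(lam - ((m : ℝ) + 1)) / ((m : ℝ) + 1)| * |(((m : ℝ) + 1) / ((m : ℝ) + 2)) ^ α|
      ≤ |bSeq lam α m| * |(lam - ((m : ℝ) + 1)) / ((m : ℝ) + 1)| * 1 := by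
        apply mul_le_mul_of_nonneg_left h2 (by positivity)
    _ = |bSeq lam α m| * |(lam - ((m : ℝ) + 1)) / ((m : ℝ) + 1)| := mul_one _
    _ ≤ |bSeq lam α m| * (1 + |lam| / ((m : ℝ) + 1)) :=
        mul_le_mul_of_nonneg_left h1 (abs_nonneg _)

lemma summable_bSeq_geom (lam : ℝ) (hlam : lam ≠ 0) (α : ℕ) {Q : ℝ} (hQ0 : 0 ≤ Q) (hQ1 : Q < 1) :
    Summable (fun m : ℕ => |bSeq lam α m| * Q ^ m) := by
  apply summable_of_ratio_norm_eventually_le (r := (1 + Q) / 2) (by linarith)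
  obtain ⟨N, hN⟩ := exists_nat_ge (2 * |lam| / (1 - Q))
  rw [Filter.eventually_atTop]
  refine ⟨N, fun m hm => ?_⟩
  have hm1 : (0:ℝ) < (m : ℝ) + 1 := by positivity
  have hNm : 2 * |lam| / (1 - Q) ≤ (m : ℝ) + 1 := by
    calc 2 * |lam| / (1 - Q) ≤ (N : ℝ) := hN
      _ ≤ (m : ℝ) := by exact_mod_cast hm
      _ ≤ (m : ℝ) + 1 := by linarith
  have key : Q * (1 + |lam| / ((m : ℝ) + 1)) ≤ (1 + Q) / 2 := by
    have h1 : |lam| / ((m : ℝ) + 1) ≤ (1 - Q) / 2 := by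
      rw [div_le_div_iff₀ hm1 (by norm_num : (0:ℝ) < 2)]
      rw [div_le_iff₀ (by linarith : (0:ℝ) < 1 - Q)] at hNm
      nlinarith
    have h2 : Q * (1 + |lam| / ((m : ℝ) + 1)) ≤ 1 * (1 + (1 - Q) / 2) := by
      apply mul_le_mul (by linarith) (by linarith) (by positivity) (by norm_num)
    nlinarith
  simp only [Real.norm_eq_abs, abs_mul, abs_abs, abs_pow, abs_of_nonneg hQ0]
  calc |bSeq lam α (m + 1)| * Q ^ (m + 1)
      ≤ (|bSeq lam α m| * (1 + |lam| / ((m : ℝ) + 1))) * Q ^ (m + 1) := by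
        apply mul_le_mul_of_nonneg_right (abs_bSeq_succ_le lam hlam α m) (by positivity)
    _ = (Q * (1 + |lam| / ((m : ℝ) + 1))) * (|bSeq lam α m| * Q ^ m) := by ring
    _ ≤ ((1 + Q) / 2) * (|bSeq lam α m| * Q ^ m) := by
        apply mul_le_mul_of_nonneg_right key (by positivity)

lemma hasSum_choose_geom (k : ℕ) {r : ℝ} (hr : |r| < 1) :
    HasSum (fun n : ℕ => (n.choose k : ℝ) * r ^ n) (r ^ k / (1 - r) ^ (k + 1)) := by
  have hr' : ‖r‖ < 1 := by rwa [Real.norm_eq_abs]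
  have h := (hasSum_choose_mul_geometric_of_norm_lt_one k hr').mul_right (r ^ k)
  have h2 : HasSum (fun n : ℕ => (((n + k).choose k : ℝ)) * r ^ (n + k))
      (1 / (1 - r) ^ (k + 1) * r ^ k) := by
    refine h.congr_fun fun n => by rw [pow_add]; ring
  rw [hasSum_nat_add_iff (f := fun n : ℕ => (n.choose k : ℝ) * r ^ n) k] at h2
  have hz : ∑ i ∈ Finset.range k, (i.choose k : ℝ) * r ^ i = 0 := by
    apply Finset.sum_eq_zero
    intro i hi
    rw [Nat.choose_eq_zero_of_lt (Finset.mem_range.1 hi)]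
    simp
  rw [hz, add_zero] at h2
  rw [show r ^ k / (1 - r) ^ (k + 1) = 1 / (1 - r) ^ (k + 1) * r ^ k by ring]
  exact h2

theorem stmt_11 (lam : ℝ) (hlam : lam ≠ 0) (α : ℕ) (hα : 1 ≤ α) (t : ℝ) (ht : |t| < 1 / 2) :
    HasSum (fun n : ℕ => altDegHarmOrd lam α n * t ^ n)
      (-(degPolylog α lam (-t / (1 - t))) / (1 - t)) := by
  classical
  have ht1 : |t| < 1 := lt_trans ht (by norm_num)
  have hs : (0:ℝ) < 1 - t := by
    have h1 : t ≤ |t| := le_abs_self t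
    linarith
  have hs' : (1 - t) ≠ 0 := ne_of_gt hs
  have hat : (0:ℝ) < 1 - |t| := by linarith
  set Q : ℝ := |t| / (1 - |t|) with hQdef
  have hQ0 : 0 ≤ Q := by positivity
  have hQ1 : Q < 1 := by rw [hQdef, div_lt_one hat]; linarith
  set f : ℕ × ℕ → ℝ :=
    fun p => bSeq lam α p.1 * ((p.2.choose (p.1 + 1) : ℝ)) * t ^ p.2 with hfdef
  have hslice : ∀ m : ℕ, HasSum (fun n : ℕ => |f (m, n)|)
      (|bSeq lam α m| * (|t| ^ (m + 1) / (1 - |t|) ^ (m + 2))) := by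
    intro m
    have h := (hasSum_choose_geom (m + 1) (by rwa [abs_abs])).mul_left |bSeq lam α m|
    refine h.congr_fun fun n => ?_
    simp only [hfdef, abs_mul, abs_pow, Nat.abs_cast, mul_assoc]
  have habs : Summable (fun p : ℕ × ℕ => |f p|) := by
    rw [summable_prod_of_nonneg (fun p => abs_nonneg _)]
    refine ⟨fun m => (hslice m).summable, ?_⟩
    have hrw : ∀ m : ℕ, (∑' n, |f (m, n)|) =
        (|t| / (1 - |t|) ^ 2) * (|bSeq lam α m| * Q ^ m) := by
      intro m
      rw [(hslice m).tsum_eq, hQdef, div_pow]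
      field_simp
      ring
    refine Summable.congr ?_ (fun m => (hrw m).symm)
    exact ((summable_bSeq_geom lam hlam α hQ0 hQ1).mul_left _)
  have hf_sum : Summable f := summable_abs_iff.mp habs
  set T : ℝ := ∑' p, f p with hTdef
  have hT : HasSum f T := hf_sum.hasSum
  have hfib1 : ∀ m : ℕ, HasSum (fun n : ℕ => f (m, n))
      (bSeq lam α m * (t ^ (m + 1) / (1 - t) ^ (m + 2))) := by
    intro m
    have h := (hasSum_choose_geom (m + 1) ht1).mul_left (bSeq lam α m)
    exact h.congr_fun fun n => by simp only [hfdef, mul_assoc]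
  have hG : HasSum (fun m : ℕ => bSeq lam α m * (t ^ (m + 1) / (1 - t) ^ (m + 2))) T :=
    hT.prod_fiberwise hfib1
  have hswap : HasSum (fun p : ℕ × ℕ => f (p.2, p.1)) T :=
    (Equiv.prodComm ℕ ℕ).hasSum_iff.2 hT
  have hfib2 : ∀ n : ℕ, HasSum (fun m : ℕ => f (m, n)) (altDegHarmOrd lam α n * t ^ n) := by
    intro n
    have hz : ∀ m ∉ Finset.range n, f (m, n) = 0 := by
      intro m hm
      simp only [Finset.mem_range, not_lt] at hm
      simp only [hfdef]
      rw [Nat.choose_eq_zero_of_lt (by omega)]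
      simp
    have h : HasSum (fun m : ℕ => f (m, n)) _ := hasSum_sum_of_ne_finset_zero hz
    convert h using 1
    rw [altDegHarmOrd, Finset.sum_mul, ← Finset.Ico_add_one_right_eq_Icc, Finset.sum_Ico_eq_sum_range]
    refine Finset.sum_congr rfl fun i _ => ?_
    have h1 : 1 + i = i + 1 := by omega
    rw [h1]
    simp only [Nat.add_sub_cancel, hfdef, bSeq]
    push_cast
    ring
  have hMain : HasSum (fun n : ℕ => altDegHarmOrd lam α n * t ^ n) T :=
    hswap.prod_fiberwise hfib2
  have hpl : HasSum (fun m : ℕ => (-lam) ^ m * degFall 1 (1 / lam) (m + 1) *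
      (-t / (1 - t)) ^ (m + 1) / ((m.factorial : ℝ) * ((m : ℝ) + 1) ^ α)) (-(1 - t) * T) := by
    refine (hG.mul_left (-(1 - t))).congr_fun fun m => ?_
    have hm1 : ((m : ℝ) + 1) ≠ 0 := by positivity
    have hfac : (m.factorial : ℝ) ≠ 0 := by exact_mod_cast m.factorial_ne_zero
    have e1 : (-t / (1 - t)) = -(t / (1 - t)) := by ring
    have h2 : ((-1 : ℝ) ^ m) * ((-1) ^ m) = 1 := by
      rw [← pow_add]; exact Even.neg_one_pow ⟨m, rfl⟩
    have key : (-lam) ^ m * degFall 1 (1 / lam) (m + 1) * (-t / (1 - t)) ^ (m + 1) =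
        -(lam ^ m * degFall 1 (1 / lam) (m + 1) * (t ^ (m + 1) / (1 - t) ^ (m + 1))) := by
      rw [e1, neg_pow (t / (1 - t)), neg_pow lam, pow_succ (-1 : ℝ) m, div_pow]
      linear_combination
        (-(lam ^ m * degFall 1 (1 / lam) (m + 1) * (t ^ (m + 1) / (1 - t) ^ (m + 1)))) * h2
    rw [key, bSeq, pow_succ (1 - t) (m + 1)]
    field_simp
  have hplv : degPolylog α lam (-t / (1 - t)) = -(1 - t) * T := by
    rw [degPolylog]; exact hpl.tsum_eq
  have hval : -(degPolylog α lam (-t / (1 - t))) / (1 - t) = T := by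
    rw [hplv]; field_simp
  rw [hval]
  exact hMain
end

section
/- Let λ be a nonzero real number, α a positive integer, and t a real number with |t| < 1/2. Then Li_{α,λ}(t/(1+t)) = Σ_{n=1}^{∞} (−1)^{n−1} (\overline{H}_{n,λ}(α−1)/n) t^n, where both series converge. -/
open Finset

lemma degFall_step (lam : ℝ) (hlam : lam ≠ 0) (k : ℕ) :
    (-lam) ^ (k+1) * degFall 1 (1/lam) (k+2)
      = ((-lam) ^ k * degFall 1 (1/lam) (k+1)) * (((k:ℝ)+1) - lam) := by
  rw [degFall, degFall, Finset.prod_range_succ]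
  push_cast
  field_simp
  ring

lemma diag_eq (lam : ℝ) {α : ℕ} (hα : 1 ≤ α) (n : ℕ) (t : ℝ) :
    ∑ k ∈ Finset.range (n+1),
      (-lam) ^ k * degFall 1 (1/lam) (k+1) / ((k.factorial : ℝ) * ((k:ℝ)+1) ^ α)
        * ((n.choose k : ℝ)) * (-t) ^ (n-k) * t ^ (k+1)
    = (-1:ℝ) ^ n * (altDegHarmOrd lam (α-1) (n+1) / ((n:ℝ)+1)) * t ^ (n+1) := by
  obtain ⟨β, rfl⟩ : ∃ β, α = β + 1 := ⟨α - 1, (Nat.succ_pred_eq_of_pos hα).symm⟩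
  have hred : β + 1 - 1 = β := rfl
  rw [altDegHarmOrd, hred, ← Finset.Ico_add_one_right_eq_Icc, Finset.sum_Ico_eq_sum_range]
  have h2 : n + 1 + 1 - 1 = n + 1 := rfl
  rw [h2, Finset.sum_div, Finset.mul_sum, Finset.sum_mul]
  refine Finset.sum_congr rfl fun k hk => ?_
  rw [Finset.mem_range] at hk
  have hkn : k ≤ n := Nat.lt_succ_iff.mp hk
  simp only [show 1 + k = k + 1 from Nat.add_comm 1 k, Nat.add_sub_cancel]
  have e1 : (-t : ℝ) ^ (n - k) = (-1:ℝ)^(n-k) * t ^ (n-k) := by rw [neg_pow]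
  have e2 : (-lam : ℝ) ^ k = (-1:ℝ)^k * lam ^ k := by rw [neg_pow]
  have e3 : (t : ℝ) ^ (n-k) * t ^ (k+1) = t ^ (n+1) := by
    rw [← pow_add]; congr 1; omega
  have e4 : (-1:ℝ) ^ (n-k) * (-1:ℝ) ^ k = (-1:ℝ) ^ n := by
    rw [← pow_add]; congr 1; omega
  have hc : ((n:ℝ)+1) * (n.choose k : ℝ) = ((n+1).choose (k+1) : ℝ) * ((k:ℝ)+1) := by
    exact_mod_cast congrArg (Nat.cast : ℕ → ℝ) (Nat.add_one_mul_choose_eq n k)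
  have hk1 : ((k:ℝ)+1) ≠ 0 := by positivity
  have hkf : ((k.factorial : ℝ)) ≠ 0 := by positivity
  have hn1 : ((n:ℝ)+1) ≠ 0 := by positivity
  have hkb : ((k:ℝ)+1)^β ≠ 0 := by positivity
  calc (-lam) ^ k * degFall 1 (1/lam) (k+1) / ((k.factorial : ℝ) * ((k:ℝ)+1) ^ (β+1))
        * ((n.choose k : ℝ)) * (-t) ^ (n-k) * t ^ (k+1)
      = ((-1:ℝ)^(n-k) * (-1:ℝ)^k) * (lam ^ k * degFall 1 (1/lam) (k+1) * (n.choose k : ℝ)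
          * (t ^ (n-k) * t ^ (k+1))) / ((k.factorial : ℝ) * ((k:ℝ)+1) ^ (β+1)) := by
        rw [e1, e2]; ring
    _ = (-1:ℝ)^n * (lam ^ k * degFall 1 (1/lam) (k+1) * (n.choose k : ℝ)
          * t ^ (n+1)) / ((k.factorial : ℝ) * ((k:ℝ)+1) ^ (β+1)) := by rw [e3, e4]
    _ = (-1:ℝ) ^ n * (((n+1).choose (k+1) : ℝ) * lam ^ k * degFall 1 (1/lam) (k+1) /
          ((((k:ℝ)+1)) ^ β * (k.factorial : ℝ)) / ((n:ℝ)+1)) * t ^ (n+1) := by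
        have key : ∀ D C C' : ℝ, ((n:ℝ)+1) * C = C' * ((k:ℝ)+1) →
            (-1:ℝ)^n * (lam^k * D * C * t^(n+1)) / ((k.factorial:ℝ) * ((k:ℝ)+1)^(β+1))
              = (-1:ℝ)^n * (C' * lam^k * D / (((k:ℝ)+1)^β * (k.factorial:ℝ)) / ((n:ℝ)+1)) * t^(n+1) := by
          intro D C C' h
          field_simp
          linear_combination (lam^k * D * t^(n+1) * ((k:ℝ)+1)^β) * h
        exact key _ _ _ hc
    _ = _ := by norm_cast

lemma aux_summable (lam : ℝ) (hlam : lam ≠ 0) (α : ℕ) {s : ℝ} (hs0 : 0 ≤ s) (hs1 : s < 1) :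
    Summable (fun k : ℕ =>
      |(-lam)^k * degFall 1 (1/lam) (k+1)| * s^(k+1) / ((k.factorial : ℝ) * ((k:ℝ)+1)^α)) := by
  set g : ℕ → ℝ := fun k =>
    |(-lam)^k * degFall 1 (1/lam) (k+1)| * s^(k+1) / ((k.factorial : ℝ) * ((k:ℝ)+1)^α) with hg
  have hgnn : ∀ k, 0 ≤ g k := fun k => by
    apply div_nonneg (mul_nonneg (abs_nonneg _) (pow_nonneg hs0 _)); positivity
  have hr : (1+s)/2 < 1 := by linarith
  apply summable_of_ratio_norm_eventually_le hr
  rw [Filter.eventually_atTop]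
  refine ⟨⌈2*s*|lam|/(1-s)⌉₊, fun k hk => ?_⟩
  have hkey : s * |lam| ≤ (1-s)/2 * ((k:ℝ)+1) := by
    have h1 : (2*s*|lam|/(1-s) : ℝ) ≤ (⌈2*s*|lam|/(1-s)⌉₊ : ℝ) := Nat.le_ceil _
    have h2 : ((⌈2*s*|lam|/(1-s)⌉₊ : ℕ) : ℝ) ≤ (k:ℝ) := by exact_mod_cast hk
    have h3 : 2*s*|lam|/(1-s) ≤ (k:ℝ) := le_trans h1 h2
    have h4 : 2*s*|lam| ≤ (1-s) * (k:ℝ) := by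
      rw [div_le_iff₀ (by linarith)] at h3; linarith
    nlinarith
  rw [Real.norm_eq_abs, Real.norm_eq_abs, abs_of_nonneg (hgnn _), abs_of_nonneg (hgnn _)]
  have hq : |(-lam)^(k+1) * degFall 1 (1/lam) (k+2)|
      = |(-lam)^k * degFall 1 (1/lam) (k+1)| * |((k:ℝ)+1) - lam| := by
    rw [degFall_step lam hlam, abs_mul]
  have main : |((k:ℝ)+1) - lam| * s * ((k:ℝ)+1)^α ≤ (1+s)/2 * (((k:ℝ)+1) * ((k:ℝ)+2)^α) := by
    have m1 : |((k:ℝ)+1) - lam| ≤ ((k:ℝ)+1) + |lam| := by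
      calc |((k:ℝ)+1) - lam| ≤ |(k:ℝ)+1| + |lam| := abs_sub _ _
        _ = ((k:ℝ)+1) + |lam| := by rw [abs_of_pos (by positivity)]
    have m2 : (((k:ℝ)+1) + |lam|) * s ≤ (1+s)/2 * ((k:ℝ)+1) := by nlinarith
    calc |((k:ℝ)+1) - lam| * s * ((k:ℝ)+1)^α
        ≤ ((((k:ℝ)+1) + |lam|) * s) * ((k:ℝ)+1)^α := by
          apply mul_le_mul_of_nonneg_right _ (by positivity)
          exact mul_le_mul_of_nonneg_right m1 hs0
      _ ≤ ((1+s)/2 * ((k:ℝ)+1)) * ((k:ℝ)+2)^α := by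
          apply mul_le_mul m2 (by gcongr <;> linarith) (by positivity) (by positivity)
      _ = (1+s)/2 * (((k:ℝ)+1) * ((k:ℝ)+2)^α) := by ring
  show g (k+1) ≤ (1+s)/2 * g k
  rw [hg]
  simp only
  rw [hq]
  rw [← mul_div_assoc, div_le_div_iff₀ (by positivity) (by positivity)]
  have expand : ((k+1:ℕ).factorial : ℝ) = ((k:ℝ)+1) * (k.factorial : ℝ) := by
    rw [Nat.factorial_succ]; push_cast; ring
  calc |(-lam)^k * degFall 1 (1/lam) (k+1)| * |((k:ℝ)+1) - lam| * s^(k+1+1)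
        * ((k.factorial : ℝ) * ((k:ℝ)+1)^α)
      = (|((k:ℝ)+1) - lam| * s * ((k:ℝ)+1)^α)
          * (|(-lam)^k * degFall 1 (1/lam) (k+1)| * s^(k+1) * (k.factorial : ℝ)) := by
        ring
    _ ≤ ((1+s)/2 * (((k:ℝ)+1) * ((k:ℝ)+2)^α))
          * (|(-lam)^k * degFall 1 (1/lam) (k+1)| * s^(k+1) * (k.factorial : ℝ)) := by
        apply mul_le_mul_of_nonneg_right main
        positivity
    _ = (1+s)/2 * (|(-lam)^k * degFall 1 (1/lam) (k+1)| * s^(k+1))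
          * (((k+1:ℕ).factorial : ℝ) * (((k+1:ℕ):ℝ)+1)^α) := by
        rw [expand]; push_cast; ring

theorem stmt_12 (lam : ℝ) (hlam : lam ≠ 0) (α : ℕ) (hα : 1 ≤ α) (t : ℝ) (ht : |t| < 1 / 2) :
    ∃ S : ℝ,
      HasSum (fun n : ℕ =>
        (-lam) ^ n * degFall 1 (1 / lam) (n + 1) * (t / (1 + t)) ^ (n + 1) /
          ((n.factorial : ℝ) * ((n : ℝ) + 1) ^ α)) S ∧
      HasSum (fun n : ℕ =>
        (-1 : ℝ) ^ n * (altDegHarmOrd lam (α - 1) (n + 1) / ((n : ℝ) + 1)) * t ^ (n + 1)) S := by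
  have hat : |t| < 1 := lt_trans ht (by norm_num)
  have h1t : (0:ℝ) < 1 + t := by
    have := (abs_lt.mp ht).1; linarith
  have h1t' : (1:ℝ) + t ≠ 0 := ne_of_gt h1t
  have h1mt : (0:ℝ) < 1 - |t| := by linarith
  set s : ℝ := |t| / (1 - |t|) with hsdef
  have hs0 : 0 ≤ s := div_nonneg (abs_nonneg _) (le_of_lt h1mt)
  have hs1 : s < 1 := (div_lt_one h1mt).mpr (by linarith)
  -- the double-indexed family
  set f : ℕ × ℕ → ℝ := fun p =>
    (-lam) ^ p.1 * degFall 1 (1/lam) (p.1+1) / ((p.1.factorial : ℝ) * ((p.1:ℝ)+1) ^ α)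
      * (((p.1+p.2).choose p.1 : ℝ)) * (-t) ^ p.2 * t ^ (p.1+1) with hfdef
  -- absolute row sums
  have row_abs : ∀ k : ℕ, HasSum (fun j => |f (k, j)|)
      (|(-lam)^k * degFall 1 (1/lam) (k+1)| * s^(k+1) / ((k.factorial : ℝ) * ((k:ℝ)+1)^α)) := by
    intro k
    have hb : ‖|t|‖ < 1 := by rwa [Real.norm_eq_abs, abs_abs]
    have h := (hasSum_choose_mul_geometric_of_norm_lt_one (𝕜 := ℝ) k hb).mul_left
      (|(-lam)^k * degFall 1 (1/lam) (k+1)| / ((k.factorial : ℝ) * ((k:ℝ)+1)^α) * |t|^(k+1))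
    have heq : (fun j : ℕ =>
        |(-lam)^k * degFall 1 (1/lam) (k+1)| / ((k.factorial : ℝ) * ((k:ℝ)+1)^α) * |t|^(k+1)
          * (((j+k).choose k : ℝ) * |t| ^ j)) = fun j => |f (k, j)| := by
      funext j
      rw [hfdef]
      simp only
      simp only [abs_mul, abs_div, abs_pow, abs_neg, Nat.abs_cast, Nat.add_comm j k, abs_abs]
      rw [abs_of_pos (show (0:ℝ) < (k:ℝ)+1 by positivity)]
      ring
    have hval : |(-lam)^k * degFall 1 (1/lam) (k+1)| / ((k.factorial : ℝ) * ((k:ℝ)+1)^α) * |t|^(k+1)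
          * (1 / (1 - |t|) ^ (k+1))
        = |(-lam)^k * degFall 1 (1/lam) (k+1)| * s^(k+1) / ((k.factorial : ℝ) * ((k:ℝ)+1)^α) := by
      have gen : ∀ A B C D : ℝ, B ≠ 0 → D ≠ 0 → A / B * C * (1/D) = A * (C/D) / B := by
        intros A B C D hB hD; field_simp
      rw [hsdef, div_pow]
      exact gen _ _ _ _ (by positivity) (by positivity)
    rw [heq, hval] at h
    exact h
  -- summability of |f|
  have habs : Summable (fun p => |f p|) := by
    refine (summable_prod_of_nonneg (fun p => abs_nonneg _)).2 ⟨fun k => (row_abs k).summable, ?_⟩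
    exact (aux_summable lam hlam α hs0 hs1).congr (fun k => ((row_abs k).tsum_eq).symm)
  have hf : Summable f := habs.of_abs
  set S : ℝ := ∑' p, f p with hSdef
  have hS : HasSum f S := hf.hasSum
  refine ⟨S, ?_, ?_⟩
  · -- first series: rows of f
    refine hS.prod_fiberwise fun k => ?_
    have hb : ‖-t‖ < 1 := by rwa [norm_neg, Real.norm_eq_abs]
    have h := (hasSum_choose_mul_geometric_of_norm_lt_one (𝕜 := ℝ) k hb).mul_left
      ((-lam)^k * degFall 1 (1/lam) (k+1) / ((k.factorial : ℝ) * ((k:ℝ)+1)^α) * t^(k+1))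
    have heq : (fun j : ℕ =>
        (-lam)^k * degFall 1 (1/lam) (k+1) / ((k.factorial : ℝ) * ((k:ℝ)+1)^α) * t^(k+1)
          * (((j+k).choose k : ℝ) * (-t) ^ j)) = fun j => f (k, j) := by
      funext j
      rw [hfdef]
      simp only
      rw [Nat.add_comm j k]
      ring
    have hval : (-lam)^k * degFall 1 (1/lam) (k+1) / ((k.factorial : ℝ) * ((k:ℝ)+1)^α) * t^(k+1)
          * (1 / (1 - -t) ^ (k+1))
        = (-lam) ^ k * degFall 1 (1 / lam) (k + 1) * (t / (1 + t)) ^ (k + 1) /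
          ((k.factorial : ℝ) * ((k : ℝ) + 1) ^ α) := by
      have gen : ∀ A B C D : ℝ, B ≠ 0 → D ≠ 0 → A / B * C * (1/D) = A * (C/D) / B := by
        intros A B C D hB hD; field_simp
      rw [sub_neg_eq_add, div_pow]
      exact gen _ _ _ _ (by positivity) (by positivity)
    rw [heq, hval] at h
    exact h
  · -- second series: diagonals of f
    set F : ℕ × ℕ → ℝ := fun q => if q.2 ≤ q.1 then f (q.2, q.1 - q.2) else 0 with hFdef
    have hi : Function.Injective (fun p : ℕ × ℕ => (p.1 + p.2, p.1)) := by
      intro p q h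
      simp only [Prod.mk.injEq] at h
      obtain ⟨h1, h2⟩ := h
      exact Prod.ext h2 (by omega)
    have hF0 : ∀ q ∉ Set.range (fun p : ℕ × ℕ => (p.1 + p.2, p.1)), F q = 0 := by
      intro q hq
      rw [hFdef]
      simp only
      by_cases hle : q.2 ≤ q.1
      · exact absurd ⟨(q.2, q.1 - q.2),
          show (q.2 + (q.1 - q.2), q.2) = q from Prod.ext (by omega) rfl⟩ hq
      · exact if_neg hle
    have hcomp : (F ∘ fun p : ℕ × ℕ => (p.1 + p.2, p.1)) = f := by
      funext p
      simp only [Function.comp_apply, hFdef]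
      rw [if_pos (by omega : p.1 ≤ p.1 + p.2)]
      congr 1
      exact Prod.ext rfl (by omega)
    have hFS : HasSum F S := (hi.hasSum_iff hF0).1 (by rw [hcomp]; exact hS)
    refine hFS.prod_fiberwise fun n => ?_
    have h0 : ∀ k ∉ Finset.range (n+1), F (n, k) = 0 := by
      intro k hk
      rw [Finset.mem_range] at hk
      rw [hFdef]
      simp only
      rw [if_neg (by omega)]
    have h := (hasSum_sum_of_ne_finset_zero h0 : HasSum (fun k => F (n, k)) _)
    have hsum : ∑ k ∈ Finset.range (n+1), F (n, k)
        = (-1:ℝ) ^ n * (altDegHarmOrd lam (α-1) (n+1) / ((n:ℝ)+1)) * t ^ (n+1) := by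
      rw [← diag_eq lam hα n t]
      refine Finset.sum_congr rfl fun k hk => ?_
      rw [Finset.mem_range] at hk
      rw [hFdef]
      simp only
      rw [if_pos (by omega : k ≤ n), hfdef]
      simp only
      rw [show k + (n - k) = n by omega]
    rwa [hsum] at h
end

section
/- Let λ be a nonzero real number, α a positive integer, and n ≥ 1 an integer. Then (1/n) \overline{H}_{n,λ}(α−1) = Σ_{m=1}^{n} C(n,m) (−1)^{m−1} H_{m,λ}(α). -/
open Finset

lemma prefix_alt (p : ℕ) : ∀ j : ℕ,
    ∑ m ∈ Finset.range (j + 1), (-1 : ℝ) ^ m * ((p + 1).choose m : ℝ)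
      = (-1) ^ j * (p.choose j : ℝ) := by
  intro j
  induction j with
  | zero => simp
  | succ j ih =>
    rw [Finset.sum_range_succ, ih, Nat.choose_succ_succ]
    push_cast
    ring

lemma total_alt (n : ℕ) (hn : 1 ≤ n) :
    ∑ m ∈ Finset.range (n + 1), (-1 : ℝ) ^ m * (n.choose m : ℝ) = 0 := by
  have h : (∑ i ∈ Finset.range (n + 1), (-1 : ℤ) ^ i * (n.choose i : ℤ)) = 0 := by
    rw [Int.alternating_sum_range_choose, if_neg (by omega)]
  exact_mod_cast h

lemma tail_alt (n k : ℕ) (hk : 1 ≤ k) (hkn : k ≤ n) :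
    ∑ m ∈ Finset.Icc k n, (-1 : ℝ) ^ (m - 1) * (n.choose m : ℝ)
      = (-1) ^ (k - 1) * ((n - 1).choose (k - 1) : ℝ) := by
  have h1 : ∑ m ∈ Finset.Icc k n, (-1 : ℝ) ^ (m - 1) * (n.choose m : ℝ)
      = - ∑ m ∈ Finset.Icc k n, (-1 : ℝ) ^ m * (n.choose m : ℝ) := by
    rw [← Finset.sum_neg_distrib]
    apply Finset.sum_congr rfl
    intro m hm
    obtain ⟨j, rfl⟩ : ∃ j, m = j + 1 := ⟨m - 1, by
      have := (Finset.mem_Icc.mp hm).1; omega⟩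
    simp [pow_succ]
  have h2 : ∑ m ∈ Finset.Icc k n, (-1 : ℝ) ^ m * (n.choose m : ℝ)
      = ∑ m ∈ Finset.range (n + 1), (-1 : ℝ) ^ m * (n.choose m : ℝ)
        - ∑ m ∈ Finset.range k, (-1 : ℝ) ^ m * (n.choose m : ℝ) := by
    rw [← Finset.Ico_add_one_right_eq_Icc, Finset.sum_Ico_eq_sub _ (by omega)]
  obtain ⟨p, rfl⟩ : ∃ p, n = p + 1 := ⟨n - 1, by omega⟩
  obtain ⟨j, rfl⟩ : ∃ j, k = j + 1 := ⟨k - 1, by omega⟩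
  rw [h1, h2, total_alt _ (by omega), prefix_alt p j]
  simp

lemma choose_mul_eq (n k : ℕ) (hk : 1 ≤ k) (hkn : k ≤ n) :
    (n.choose k) * k = n * ((n - 1).choose (k - 1)) := by
  obtain ⟨p, rfl⟩ : ∃ p, n = p + 1 := ⟨n - 1, by omega⟩
  obtain ⟨j, rfl⟩ : ∃ j, k = j + 1 := ⟨k - 1, by omega⟩
  simp only [Nat.add_sub_cancel]
  exact (Nat.add_one_mul_choose_eq p j).symm

theorem stmt_13 (lam : ℝ) (hlam : lam ≠ 0) (α : ℕ) (hα : 1 ≤ α) (n : ℕ) (hn : 1 ≤ n) :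
    (1 / (n : ℝ)) * altDegHarmOrd lam (α - 1) n =
      ∑ m ∈ Finset.Icc 1 n, (n.choose m : ℝ) * (-1 : ℝ) ^ (m - 1) * degHarmOrd lam α m := by
  unfold altDegHarmOrd degHarmOrd
  rw [Finset.mul_sum]
  have hrhs : ∑ m ∈ Finset.Icc 1 n, (n.choose m : ℝ) * (-1 : ℝ) ^ (m - 1) *
        (∑ k ∈ Finset.Icc 1 m,
          (-lam) ^ (k - 1) * degFall 1 (1 / lam) k / ((k : ℝ) ^ α * ((k - 1).factorial : ℝ)))
      = ∑ k ∈ Finset.Icc 1 n, ((-1 : ℝ) ^ (k - 1) * ((n - 1).choose (k - 1) : ℝ)) *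
          ((-lam) ^ (k - 1) * degFall 1 (1 / lam) k /
            ((k : ℝ) ^ α * ((k - 1).factorial : ℝ))) := by
    simp_rw [Finset.mul_sum]
    rw [Finset.sum_comm' (t' := Finset.Icc 1 n) (s' := fun k => Finset.Icc k n)
      (by intro m k; simp only [Finset.mem_Icc]; omega)]
    apply Finset.sum_congr rfl
    intro k hk
    obtain ⟨hk1, hkn⟩ := Finset.mem_Icc.mp hk
    rw [← tail_alt n k hk1 hkn, Finset.sum_mul]
    apply Finset.sum_congr rfl
    intro m _
    ring
  rw [hrhs]
  apply Finset.sum_congr rfl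
  intro k hk
  obtain ⟨hk1, hkn⟩ := Finset.mem_Icc.mp hk
  have hkR : (k : ℝ) ≠ 0 := Nat.cast_ne_zero.mpr (by omega)
  have hnR : (n : ℝ) ≠ 0 := Nat.cast_ne_zero.mpr (by omega)
  have hfac : ((k - 1).factorial : ℝ) ≠ 0 := Nat.cast_ne_zero.mpr (Nat.factorial_ne_zero _)
  have hneg : (-lam) ^ (k - 1) = (-1 : ℝ) ^ (k - 1) * lam ^ (k - 1) := by
    rw [neg_pow]
  have hα' : (k : ℝ) ^ α = (k : ℝ) ^ (α - 1) * k := by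
    conv_lhs => rw [show α = (α - 1) + 1 by omega]
    rw [pow_succ]
  have hch : ((n.choose k : ℝ)) * k = (n : ℝ) * ((n - 1).choose (k - 1) : ℝ) := by
    exact_mod_cast choose_mul_eq n k hk1 hkn
  have hsq : ((-1 : ℝ) ^ (k - 1)) * ((-1 : ℝ) ^ (k - 1)) = 1 := by
    rw [← pow_add, ← two_mul, pow_mul]; norm_num
  rw [hneg, hα']
  have hR : (-1 : ℝ) ^ (k - 1) * (((n - 1).choose (k - 1) : ℝ)) *
        ((-1 : ℝ) ^ (k - 1) * lam ^ (k - 1) * degFall 1 (1 / lam) k /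
          ((k : ℝ) ^ (α - 1) * (k : ℝ) * ((k - 1).factorial : ℝ)))
      = (((n - 1).choose (k - 1) : ℝ)) *
        (lam ^ (k - 1) * degFall 1 (1 / lam) k /
          ((k : ℝ) ^ (α - 1) * (k : ℝ) * ((k - 1).factorial : ℝ))) := by
    rw [div_eq_mul_inv, div_eq_mul_inv]
    calc (-1 : ℝ) ^ (k - 1) * (((n - 1).choose (k - 1) : ℝ)) *
          ((-1 : ℝ) ^ (k - 1) * lam ^ (k - 1) * degFall 1 (1 / lam) k *
            ((k : ℝ) ^ (α - 1) * (k : ℝ) * ((k - 1).factorial : ℝ))⁻¹)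
        = ((-1 : ℝ) ^ (k - 1) * (-1 : ℝ) ^ (k - 1)) *
          ((((n - 1).choose (k - 1) : ℝ)) * (lam ^ (k - 1) * degFall 1 (1 / lam) k *
            ((k : ℝ) ^ (α - 1) * (k : ℝ) * ((k - 1).factorial : ℝ))⁻¹)) := by ring
      _ = _ := by rw [hsq]; ring
  rw [hR]
  have hpow : ((k : ℝ) ^ (α - 1)) ≠ 0 := pow_ne_zero _ hkR
  field_simp
  linear_combination (degFall 1 (1 / lam) k) * hch
end

section
/- Let λ be a nonzero real number, α a positive integer, and n ≥ 1 an integer. Then H_{n,λ}(α) = Σ_{m=1}^{n} C(n,m) (−1)^{m−1} \overline{H}_{m,λ}(α−1)/m. -/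
open Finset

lemma beta_sum (N : ℕ) : ∀ k : ℕ, 1 ≤ k →
    ∑ j ∈ Finset.range (N+1), (-1:ℝ)^j * (N.choose j) / (j + k) =
      (N.factorial : ℝ) * ((k-1).factorial) / ((N+k).factorial) := by
  induction N with
  | zero =>
    intro k hk
    obtain ⟨m, rfl⟩ : ∃ m, k = m + 1 := ⟨k - 1, (Nat.succ_pred_eq_of_pos hk).symm⟩
    have h1 : ((m.factorial : ℝ)) ≠ 0 := Nat.cast_ne_zero.2 m.factorial_ne_zero
    have h2 : ((m : ℝ) + 1) ≠ 0 := by positivity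
    simp [Nat.factorial_succ]
    field_simp
  | succ N ih =>
    intro k hk
    have hk0 : ((k : ℝ)) ≠ 0 := by
      have : 0 < k := hk
      positivity
    have key : ∑ j ∈ Finset.range (N+2), (-1:ℝ)^j * ((N+1).choose j) / (j + k)
        = (∑ j ∈ Finset.range (N+1), (-1:ℝ)^j * (N.choose j) / (j + k))
          - ∑ j ∈ Finset.range (N+1), (-1:ℝ)^j * (N.choose j) / (j + (k+1)) := by
      rw [Finset.sum_range_succ' (fun j => (-1:ℝ)^j * ((N+1).choose j) / (j + k)) (N+1)]
      have hsplit : ∀ j ∈ Finset.range (N+1),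
          (-1:ℝ)^(j+1) * (((N+1).choose (j+1) : ℕ) : ℝ) / (((j+1 : ℕ) : ℝ) + k)
          = -((-1:ℝ)^j * (N.choose j) / (j + ((k:ℝ)+1)))
            + (-1:ℝ)^(j+1) * (N.choose (j+1)) / (((j+1 : ℕ) : ℝ) + k) := by
        intro j _
        rw [Nat.choose_succ_succ]
        have hne : ((j:ℝ) + 1 + k) ≠ 0 := by positivity
        push_cast
        field_simp
        ring
      rw [Finset.sum_congr rfl hsplit, Finset.sum_add_distrib]
      have hT : ∑ j ∈ Finset.range (N+1), (-1:ℝ)^(j+1) * (N.choose (j+1)) / (((j+1:ℕ):ℝ) + k)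
          = (∑ j ∈ Finset.range (N+1), (-1:ℝ)^j * (N.choose j) / (j + k))
            - (1 : ℝ) / k := by
        have h2 := Finset.sum_range_succ' (fun i => (-1:ℝ)^i * (N.choose i) / (i + k)) (N+1)
        have hlast : ∑ i ∈ Finset.range (N+2), (-1:ℝ)^i * (N.choose i) / (i + k)
            = ∑ i ∈ Finset.range (N+1), (-1:ℝ)^i * (N.choose i) / (i + k) := by
          rw [Finset.sum_range_succ]
          simp [Nat.choose_succ_self]
        rw [hlast] at h2
        have h0 : ((-1:ℝ)^0 * ((N.choose 0 : ℕ):ℝ) / (((0:ℕ):ℝ) + k)) = 1 / k := by simp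
        simp only [h0] at h2
        linarith [h2]
      rw [hT]
      have : ∑ j ∈ Finset.range (N+1), -((-1:ℝ)^j * (N.choose j) / (j + ((k:ℝ)+1)))
          = -∑ j ∈ Finset.range (N+1), ((-1:ℝ)^j * (N.choose j) / (j + ((k:ℝ)+1))) :=
        Finset.sum_neg_distrib _
      rw [this]
      have hcast : ∑ j ∈ Finset.range (N+1), ((-1:ℝ)^j * (N.choose j) / (j + ((k:ℝ)+1)))
          = ∑ j ∈ Finset.range (N+1), ((-1:ℝ)^j * (N.choose j) / (j + (((k+1:ℕ)):ℝ))) := by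
        apply Finset.sum_congr rfl; intro j _; push_cast; ring_nf
      rw [hcast]
      simp
      ring
    rw [show N + 1 + 1 = N + 2 from rfl, key, ih k hk,
      show ((k:ℝ)+1) = (((k+1:ℕ)):ℝ) from by push_cast; ring, ih (k+1) (by omega)]
    have hfk : (k:ℝ) * ((k-1).factorial : ℝ) = (k.factorial : ℝ) := by
      obtain ⟨m, rfl⟩ : ∃ m, k = m + 1 := ⟨k - 1, (Nat.succ_pred_eq_of_pos hk).symm⟩
      simp [Nat.factorial_succ]
    have e1 : (N + (k+1)).factorial = (N + k + 1) * (N+k).factorial := by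
      rw [show N + (k+1) = (N+k) + 1 from by omega, Nat.factorial_succ]
    have e2 : (N + 1 + k).factorial = (N + k + 1) * (N+k).factorial := by
      rw [show N + 1 + k = (N+k) + 1 from by omega, Nat.factorial_succ]
    have e3 : (N+1).factorial = (N+1) * N.factorial := Nat.factorial_succ N
    have e4 : (k+1-1) = k := by omega
    rw [e1, e2, e3, e4]
    have hNk : ((N+k).factorial : ℝ) ≠ 0 := Nat.cast_ne_zero.2 (Nat.factorial_ne_zero _)
    have hNk1 : ((N:ℝ) + k + 1) ≠ 0 := by positivity
    push_cast
    rw [← hfk]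
    field_simp
    ring

lemma inner_claim (n k : ℕ) (hk : 1 ≤ k) (hkn : k ≤ n) :
    ∑ m ∈ Finset.Icc k n, (n.choose m : ℝ) * (-1:ℝ)^(m-1) * (m.choose k : ℝ) / m
      = (-1:ℝ)^(k-1) / k := by
  have hk0 : ((k:ℝ)) ≠ 0 := by
    have : 0 < k := hk
    positivity
  have h1 : ∑ m ∈ Finset.Icc k n, (n.choose m : ℝ) * (-1:ℝ)^(m-1) * (m.choose k : ℝ) / m
      = ∑ j ∈ Finset.range ((n-k)+1),
          (n.choose k : ℝ) * (-1:ℝ)^(k-1) *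
            ((-1:ℝ)^j * (((n-k).choose j : ℕ):ℝ) / ((j:ℝ) + k)) := by
    rw [← Finset.Ico_add_one_right_eq_Icc, Finset.sum_Ico_eq_sum_range,
      show n + 1 - k = (n-k)+1 from by omega]
    apply Finset.sum_congr rfl
    intro j hj
    have hj' : j ≤ n - k := Nat.lt_succ_iff.mp (Finset.mem_range.mp hj)
    have hmn : k + j ≤ n := by omega
    have hcc : n.choose (k+j) * (k+j).choose k = n.choose k * (n-k).choose j := by
      have := Nat.choose_mul (n := n) (Nat.le_add_right k j)
      simpa using this
    have hcast : (n.choose (k+j) : ℝ) * ((k+j).choose k : ℝ)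
        = (n.choose k : ℝ) * ((n-k).choose j : ℝ) := by exact_mod_cast hcc
    have hsign : (-1:ℝ)^(k+j-1) = (-1:ℝ)^(k-1) * (-1:ℝ)^j := by
      rw [show k + j - 1 = (k-1) + j from by omega, pow_add]
    have hkj : (((k+j:ℕ)):ℝ) = (j:ℝ) + k := by push_cast; ring
    rw [hsign, hkj]
    have hd : ((j:ℝ) + k) ≠ 0 := by positivity
    field_simp
    linear_combination hcast
  rw [h1, ← Finset.mul_sum, beta_sum (n-k) k hk, show n - k + k = n from by omega]
  obtain ⟨m, rfl⟩ : ∃ m, k = m + 1 := ⟨k - 1, (Nat.succ_pred_eq_of_pos hk).symm⟩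
  have hc := Nat.choose_mul_factorial_mul_factorial hkn
  rw [Nat.factorial_succ] at hc
  have hcR : (n.choose (m+1) : ℝ) * (((m+1) : ℝ) * (m.factorial : ℝ)) * ((n-(m+1)).factorial : ℝ)
      = (n.factorial : ℝ) := by exact_mod_cast hc
  have h2 : ((n.factorial : ℝ)) ≠ 0 := Nat.cast_ne_zero.2 (Nat.factorial_ne_zero _)
  have h3 : ((m:ℝ) + 1) ≠ 0 := by positivity
  simp only [Nat.add_sub_cancel]
  push_cast
  field_simp
  linear_combination hcR

theorem stmt_14 (lam : ℝ) (hlam : lam ≠ 0) (α : ℕ) (hα : 1 ≤ α) (n : ℕ) (hn : 1 ≤ n) :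
    degHarmOrd lam α n =
      ∑ m ∈ Finset.Icc 1 n,
        (n.choose m : ℝ) * (-1 : ℝ) ^ (m - 1) * (altDegHarmOrd lam (α - 1) m / (m : ℝ)) := by
  obtain ⟨β, rfl⟩ : ∃ β, α = β + 1 := ⟨α - 1, by omega⟩
  simp only [Nat.add_sub_cancel]
  have hmain : ∀ m ∈ Finset.Icc 1 n,
      (n.choose m : ℝ) * (-1:ℝ)^(m-1) * (altDegHarmOrd lam β m / (m:ℝ))
      = ∑ k ∈ Finset.Icc 1 m, ((n.choose m : ℝ) * (-1:ℝ)^(m-1) * (m.choose k : ℝ) / m)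
          * (lam^(k-1) * degFall 1 (1/lam) k / ((k:ℝ)^β * ((k-1).factorial : ℝ))) := by
    intro m _
    rw [altDegHarmOrd, Finset.sum_div, Finset.mul_sum]
    apply Finset.sum_congr rfl
    intro k _
    ring
  rw [Finset.sum_congr rfl hmain]
  rw [Finset.sum_comm' (s := Finset.Icc 1 n) (t := fun m => Finset.Icc 1 m)
    (t' := Finset.Icc 1 n) (s' := fun k => Finset.Icc k n)
    (fun m k => by simp only [Finset.mem_Icc]; omega)]
  rw [degHarmOrd]
  apply Finset.sum_congr rfl
  intro k hk
  obtain ⟨hk1, hkn⟩ := Finset.mem_Icc.mp hk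
  rw [← Finset.sum_mul, inner_claim n k hk1 hkn, pow_succ, neg_pow]
  ring
end

section
/- Let λ be a nonzero real number, let r and α be positive integers, and let t be a real number with |t| < 1. Then the series Σ_{n=1}^{∞} H_{n,λ}^{(r)}(α) t^n converges and Σ_{n=1}^{∞} H_{n,λ}^{(r)}(α) t^n = Li_{α,λ}(t)/(1−t)^r. -/
open Finset

private lemma polylog_summable (lam : ℝ) (hlam : lam ≠ 0) (α : ℕ) {t : ℝ} (ht : |t| < 1) :
    Summable fun n : ℕ => ‖(-lam) ^ n * degFall 1 (1 / lam) (n + 1) * t ^ (n + 1) /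
      ((n.factorial : ℝ) * ((n : ℝ) + 1) ^ α)‖ := by
  rcases eq_or_ne t 0 with rfl | ht0
  · simp
  have htpos : 0 < |t| := abs_pos.mpr ht0
  set D : ℕ → ℝ := fun n => ∏ i ∈ Finset.range n, ((|lam| + (i : ℝ) + 1) / ((i : ℝ) + 1))
    with hD
  have hDpos : ∀ n, 0 < D n := fun n => Finset.prod_pos (fun i _ => by positivity)
  have hgpos : ∀ n : ℕ, 0 < D n * |t| ^ n := fun n => mul_pos (hDpos n) (pow_pos htpos n)
  have hgsum : Summable fun n : ℕ => D n * |t| ^ n := by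
    apply summable_of_ratio_test_tendsto_lt_one ht
      (Filter.Eventually.of_forall fun n => (hgpos n).ne')
    have heq : (fun n : ℕ => ‖D (n + 1) * |t| ^ (n + 1)‖ / ‖D n * |t| ^ n‖)
        = fun n : ℕ => (1 + |lam| / ((n : ℝ) + 1)) * |t| := by
      funext n
      rw [Real.norm_of_nonneg (hgpos (n + 1)).le, Real.norm_of_nonneg (hgpos n).le]
      have h1 : D (n + 1) = D n * ((|lam| + (n : ℝ) + 1) / ((n : ℝ) + 1)) :=
        Finset.prod_range_succ _ n
      have h2 : ((n : ℝ) + 1) ≠ 0 := by positivity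
      rw [h1, pow_succ]
      have h3 : D n ≠ 0 := (hDpos n).ne'
      field_simp
      ring
    rw [heq]
    have h0 : Filter.Tendsto (fun n : ℕ => |lam| / ((n : ℝ) + 1)) Filter.atTop (nhds 0) := by
      have := tendsto_one_div_add_atTop_nhds_zero_nat.const_mul |lam|
      simpa [div_eq_mul_inv, mul_comm] using this
    have := ((h0.const_add 1).mul_const |t|)
    simpa using this
  apply Summable.of_nonneg_of_le (fun n => norm_nonneg _) _ hgsum
  intro n
  have habs : ‖(-lam) ^ n * degFall 1 (1 / lam) (n + 1)‖
      ≤ ∏ i ∈ Finset.range n, (|lam| + (i : ℝ) + 1) := by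
    rw [norm_mul, norm_pow, norm_neg, Real.norm_eq_abs, Real.norm_eq_abs]
    rw [degFall, Finset.abs_prod]
    rw [Finset.prod_range_succ']
    simp only [Nat.cast_zero, zero_mul, sub_zero, abs_one, mul_one]
    have hpows : |lam| ^ n = ∏ _i ∈ Finset.range n, |lam| := by simp
    rw [hpows, ← Finset.prod_mul_distrib]
    apply Finset.prod_le_prod (fun i _ => by positivity)
    intro i _
    rw [← abs_mul]
    have hmul : lam * (1 - (↑(i + 1) : ℝ) * (1 / lam)) = lam - ((i : ℝ) + 1) := by
      field_simp
      push_cast; ring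
    rw [hmul]
    calc |lam - ((i : ℝ) + 1)| ≤ |lam| + |((i : ℝ) + 1)| := abs_sub _ _
      _ = |lam| + (i : ℝ) + 1 := by
          rw [abs_of_nonneg (by positivity : (0:ℝ) ≤ (i : ℝ) + 1)]; ring
  have hfact : (0:ℝ) < (n.factorial : ℝ) := by exact_mod_cast n.factorial_pos
  have hpow : (1:ℝ) ≤ ((n : ℝ) + 1) ^ α := one_le_pow₀ (by linarith [Nat.cast_nonneg (α := ℝ) n])
  calc ‖(-lam) ^ n * degFall 1 (1 / lam) (n + 1) * t ^ (n + 1) /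
        ((n.factorial : ℝ) * ((n : ℝ) + 1) ^ α)‖
      = ‖(-lam) ^ n * degFall 1 (1 / lam) (n + 1)‖ * |t| ^ (n + 1) /
        ((n.factorial : ℝ) * ((n : ℝ) + 1) ^ α) := by
        rw [norm_div, norm_mul, norm_pow, Real.norm_eq_abs t, Real.norm_eq_abs]
        congr 1
        exact Real.norm_of_nonneg (by positivity)
    _ ≤ (∏ i ∈ Finset.range n, (|lam| + (i : ℝ) + 1)) * |t| ^ n /
        ((n.factorial : ℝ) * 1) := by
        apply div_le_div₀ (by positivity)
        · apply mul_le_mul habs _ (by positivity) (by positivity)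
          calc |t| ^ (n + 1) = |t| ^ n * |t| := pow_succ _ _
            _ ≤ |t| ^ n * 1 := by
                apply mul_le_mul_of_nonneg_left ht.le (by positivity)
            _ = |t| ^ n := mul_one _
        · positivity
        · apply mul_le_mul_of_nonneg_left hpow hfact.le
    _ = D n * |t| ^ n := by
        rw [mul_one]
        show _ = (∏ i ∈ Finset.range n, ((|lam| + (i : ℝ) + 1) / ((i : ℝ) + 1))) * |t| ^ n
        have hfacteq : (∏ i ∈ Finset.range n, ((i : ℝ) + 1)) = (n.factorial : ℝ) := by
          rw [← Finset.prod_range_add_one_eq_factorial]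
          push_cast
          rfl
        rw [Finset.prod_div_distrib, hfacteq]
        ring

private lemma cauchy_step {t : ℝ} (ht : |t| < 1) (a : ℕ → ℝ) (ha0 : a 0 = 0)
    (S : ℝ) (hS : HasSum (fun n => a n * t ^ n) S)
    (hnorm : Summable fun n => ‖a n * t ^ n‖) :
    HasSum (fun n => (∑ k ∈ Finset.Icc 1 n, a k) * t ^ n) (S / (1 - t)) ∧
      Summable fun n => ‖(∑ k ∈ Finset.Icc 1 n, a k) * t ^ n‖ := by
  have h1t : (1 : ℝ) - t ≠ 0 := by
    intro h
    rw [sub_eq_zero] at h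
    rw [← h] at ht
    simp at ht
  have hg : Summable fun n : ℕ => ‖t ^ n‖ := by
    simpa [norm_pow] using summable_geometric_of_lt_one (abs_nonneg t) ht
  have key : ∀ n : ℕ, (∑ k ∈ Finset.range (n + 1), (a k * t ^ k) * t ^ (n - k))
      = (∑ k ∈ Finset.Icc 1 n, a k) * t ^ n := by
    intro n
    have hins : Finset.range (n + 1) = insert 0 (Finset.Icc 1 n) := by
      ext x; simp; omega
    rw [Finset.sum_mul, hins, Finset.sum_insert (by simp)]
    rw [ha0, zero_mul, zero_mul, zero_add]
    apply Finset.sum_congr rfl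
    intro k hk
    rw [Finset.mem_Icc] at hk
    rw [mul_assoc, ← pow_add]
    congr 2
    omega
  have hsumnorm : Summable fun n => ‖(∑ k ∈ Finset.Icc 1 n, a k) * t ^ n‖ := by
    have := summable_norm_sum_mul_range_of_summable_norm hnorm hg
    simpa [key] using this
  refine ⟨?_, hsumnorm⟩
  have hsum : Summable fun n => (∑ k ∈ Finset.Icc 1 n, a k) * t ^ n := hsumnorm.of_norm
  have htsum : (∑' n : ℕ, (∑ k ∈ Finset.Icc 1 n, a k) * t ^ n) = S / (1 - t) := by
    have hmul := tsum_mul_tsum_eq_tsum_sum_range_of_summable_norm hnorm hg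
    have : (∑' n : ℕ, ∑ k ∈ Finset.range (n + 1), (a k * t ^ k) * t ^ (n - k))
        = ∑' n : ℕ, (∑ k ∈ Finset.Icc 1 n, a k) * t ^ n := by
      apply tsum_congr key
    rw [this] at hmul
    rw [← hmul, hS.tsum_eq, tsum_geometric_of_norm_lt_one (by simpa using ht),
      div_eq_mul_inv]
  have := hsum.hasSum
  rwa [htsum] at this

theorem stmt_15 (lam : ℝ) (hlam : lam ≠ 0) (r α : ℕ) (hr : 1 ≤ r) (hα : 1 ≤ α)
    (t : ℝ) (ht : |t| < 1) :
    HasSum (fun n : ℕ => degHyperHarm lam α r n * t ^ n)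
      (degPolylog α lam t / (1 - t) ^ r) := by
  have h1t : (1 : ℝ) - t ≠ 0 := by
    intro h
    rw [sub_eq_zero] at h
    rw [← h] at ht
    simp at ht
  set a : ℕ → ℝ := fun k =>
    (-lam) ^ (k - 1) * degFall 1 (1 / lam) k / ((k : ℝ) ^ α * ((k - 1).factorial : ℝ))
    with ha
  have ha0 : a 0 = 0 := by
    simp [ha, zero_pow (by omega : α ≠ 0)]
  have hshift : (fun n : ℕ => a (n + 1) * t ^ (n + 1))
      = fun n : ℕ => (-lam) ^ n * degFall 1 (1 / lam) (n + 1) * t ^ (n + 1) /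
        ((n.factorial : ℝ) * ((n : ℝ) + 1) ^ α) := by
    funext n
    simp only [ha, Nat.add_sub_cancel]
    push_cast
    ring
  have hnorm1 : Summable fun n : ℕ => ‖a (n + 1) * t ^ (n + 1)‖ := by
    rw [show (fun n : ℕ => ‖a (n + 1) * t ^ (n + 1)‖)
        = fun n : ℕ => ‖(-lam) ^ n * degFall 1 (1 / lam) (n + 1) * t ^ (n + 1) /
          ((n.factorial : ℝ) * ((n : ℝ) + 1) ^ α)‖ by
        funext n; rw [congrFun hshift n]]
    exact polylog_summable lam hlam α ht
  have hnormfull : Summable fun n : ℕ => ‖a n * t ^ n‖ :=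
    (summable_nat_add_iff 1).mp hnorm1
  have hs1 : HasSum (fun n : ℕ => a (n + 1) * t ^ (n + 1)) (degPolylog α lam t) := by
    rw [hshift]
    exact (polylog_summable lam hlam α ht).of_norm.hasSum
  have hsfull : HasSum (fun n : ℕ => a n * t ^ n) (degPolylog α lam t) := by
    have := (hasSum_nat_add_iff (f := fun n : ℕ => a n * t ^ n) 1).mp hs1
    simpa [ha0] using this
  suffices H : ∀ r : ℕ, 1 ≤ r →
      HasSum (fun n : ℕ => degHyperHarm lam α r n * t ^ n)
        (degPolylog α lam t / (1 - t) ^ r) ∧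
      Summable fun n : ℕ => ‖degHyperHarm lam α r n * t ^ n‖ by
    exact (H r hr).1
  intro r hr
  induction r, hr using Nat.le_induction with
  | base =>
      have hc := cauchy_step ht a ha0 _ hsfull hnormfull
      have hfun : (fun n : ℕ => (∑ k ∈ Finset.Icc 1 n, a k) * t ^ n)
          = fun n : ℕ => degHyperHarm lam α 1 n * t ^ n := by
        funext n
        simp [degHyperHarm, degHarmOrd, ha]
      rw [hfun] at hc
      simpa [pow_one, degHyperHarm, degHarmOrd, ha] using hc
  | succ s hs ih =>
      obtain ⟨m, rfl⟩ : ∃ m, s = m + 1 := ⟨s - 1, by omega⟩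
      have h0 : degHyperHarm lam α (m + 1) 0 = 0 := by
        cases m <;> simp [degHyperHarm, degHarmOrd]
      have hc := cauchy_step ht (fun k => degHyperHarm lam α (m + 1) k) h0 _ ih.1 ih.2
      have hfun : (fun n : ℕ => (∑ k ∈ Finset.Icc 1 n, degHyperHarm lam α (m + 1) k) * t ^ n)
          = fun n : ℕ => degHyperHarm lam α (m + 1 + 1) n * t ^ n := by
        funext n
        rfl
      have hval : degPolylog α lam t / (1 - t) ^ (m + 1) / (1 - t)
          = degPolylog α lam t / (1 - t) ^ (m + 1 + 1) := by
        rw [div_div, ← pow_succ]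
      rw [hfun, hval] at hc
      exact hc
end
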